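/- If π_t : Θ → (0,1) is increasing and π_d(θ) = (π_t(θ))^c for a constant c ∈ (0,1), then t is more difficult than d. -/

import Mathlib

open Set

lemma stmt_3_aux1 {c x y : ℝ} (hc : c ∈ Ioo (0:ℝ) 1) (hx : 0 < x) (hxy : x ≤ y) :
    y ^ c * x ≤ y * x ^ c := by
  have hy : 0 < y := lt_of_lt_of_le hx hxy
  have h1 : (1:ℝ) ≤ y / x := (one_le_div hx).2 hxy
  have h2 : (y / x) ^ c ≤ (y / x) ^ (1:ℝ) :=
    Real.rpow_le_rpow_of_exponent_le h1 hc.2.le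
  rw [Real.rpow_one, Real.div_rpow hy.le hx.le] at h2
  have hxc : (0:ℝ) < x ^ c := Real.rpow_pos_of_pos hx c
  rw [div_le_div_iff₀ hxc hx] at h2
  linarith

lemma stmt_3_aux2 {c x y : ℝ} (hc : c ∈ Ioo (0:ℝ) 1) (hx : 0 < x) (hxy : x ≤ y)
    (hy : y < 1) : (1 - y) * x ^ c + (y - x) ≤ (1 - x) * y ^ c := by
  have hcc := Real.concaveOn_rpow hc.1.le hc.2.le
  have hx1 : x < 1 := lt_of_le_of_lt hxy hy
  have hd : (0:ℝ) < 1 - x := by linarith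
  have ha : (0:ℝ) ≤ (1 - y) / (1 - x) := div_nonneg (by linarith) hd.le
  have hb : (0:ℝ) ≤ (y - x) / (1 - x) := div_nonneg (by linarith) hd.le
  have hab : (1 - y) / (1 - x) + (y - x) / (1 - x) = 1 := by
    field_simp
    ring
  have key := hcc.2 (show x ∈ Ici (0:ℝ) from hx.le) (show (1:ℝ) ∈ Ici (0:ℝ) by norm_num)
    ha hb hab
  simp only [smul_eq_mul, Real.one_rpow] at key
  have hpt : (1 - y) / (1 - x) * x + (y - x) / (1 - x) * (1:ℝ) = y := by
    rw [div_mul_eq_mul_div, div_mul_eq_mul_div, ← add_div, div_eq_iff hd.ne']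
    ring
  rw [hpt] at key
  have key' : ((1 - y) * x ^ c + (y - x)) / (1 - x) ≤ y ^ c := by
    calc ((1 - y) * x ^ c + (y - x)) / (1 - x)
        = (1 - y) / (1 - x) * x ^ c + (y - x) / (1 - x) * 1 := by ring
      _ ≤ y ^ c := key
  calc (1 - y) * x ^ c + (y - x) = ((1 - y) * x ^ c + (y - x)) / (1 - x) * (1 - x) := by
        field_simp
    _ ≤ y ^ c * (1 - x) := by
        exact mul_le_mul_of_nonneg_right key' hd.le
    _ = (1 - x) * y ^ c := by ring

/-- If `πd θ = (πt θ) ^ c` for a constant `c ∈ (0,1)`, with `πt` increasing and interior,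
then `t` is more difficult than `d`. -/
theorem stmt_3 (Θ : Set ℝ) (πt πd : ℝ → ℝ) (c : ℝ) (hc : c ∈ Ioo (0:ℝ) 1)
    (hrt : ∀ θ ∈ Θ, πt θ ∈ Ioo (0:ℝ) 1)
    (hdef : ∀ θ ∈ Θ, πd θ = (πt θ) ^ c)
    (hmono : ∀ θ ∈ Θ, ∀ θ' ∈ Θ, θ ≤ θ' → πt θ ≤ πt θ') :
    ∀ θ ∈ Θ, ∀ θ' ∈ Θ, θ' < θ →
      πt θ * πd θ' ≥ πd θ * πt θ' ∧
      (1 - πt θ) * (1 - πd θ') ≥ (1 - πd θ) * (1 - πt θ') := by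
  intro θ hθ θ' hθ' hlt
  set x := πt θ' with hxdef
  set y := πt θ with hydef
  have hx := hrt θ' hθ'
  have hy := hrt θ hθ
  have hxy : x ≤ y := hmono θ' hθ' θ hθ hlt.le
  rw [hdef θ hθ, hdef θ' hθ']
  constructor
  · exact stmt_3_aux1 hc hx.1 hxy
  · have h := stmt_3_aux2 hc hx.1 hxy hy.2
    nlinarith [h]
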